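/- There is no finite non-abelian group G with |Z(G)| = 3 such that |C_G(x)| = 6 for every noncentral element x of G. In particular, no finite non-abelian group with center of order 3 is strong claw-free. -/
import Mathlib

private lemma card_carrier_mul_card_centralizer {G : Type} [Group G] [Fintype G] (g : G) :
    Nat.card (ConjClasses.mk g).carrier * Nat.card (Subgroup.centralizer ({g} : Set G)) =
      Nat.card G := by
  classical
  rw [Subgroup.nat_card_centralizer_nat_card_stabilizer, ← ConjAct.orbit_eq_carrier_conjClasses]
  simp only [Nat.card_eq_fintype_card]
  exact MulAction.card_orbit_mul_card_stabilizer_eq_card_group (ConjAct G) g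

private lemma key_lemma (G : Type) [Group G] [Fintype G]
    (hna : ¬ ∀ a b : G, a * b = b * a)
    (hZ : Nat.card (Subgroup.center G) = 3)
    (hC : ∀ x : G, x ∉ Subgroup.center G →
      Nat.card (Subgroup.centralizer ({x} : Set G)) = 6) : False := by
  classical
  push_neg at hna
  obtain ⟨a, b, hab⟩ := hna
  have ha : a ∉ Subgroup.center G := fun h => hab ((Subgroup.mem_center_iff.mp h b).symm)
  have hp3 : Fact (Nat.Prime 3) := ⟨by norm_num⟩
  -- Sylow 3-subgroup equals the center, so 9 does not divide |G|
  have hZp : IsPGroup 3 (Subgroup.center G) := IsPGroup.of_card (n := 1) (by simpa using hZ)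
  obtain ⟨P, hZP⟩ := hZp.exists_le_sylow
  have hPZ : (P : Subgroup G) ≤ Subgroup.center G := by
    intro g hg
    by_contra hgZ
    set Q := Subgroup.centralizer ({g} : Set G) ⊓ (P : Subgroup G) with hQdef
    have hQ6 : Nat.card Q ∣ 6 := hC g hgZ ▸ Subgroup.card_dvd_of_le inf_le_left
    have hQp : IsPGroup 3 Q := P.isPGroup'.to_le inf_le_right
    obtain ⟨n, hn⟩ := IsPGroup.iff_card.mp hQp
    have hn1 : n ≤ 1 := by
      by_contra hcon
      have h9 : (9:ℕ) ∣ 6 := by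
        refine dvd_trans ?_ (hn ▸ hQ6)
        have : (9:ℕ) = 3 ^ 2 := by norm_num
        rw [this]
        exact pow_dvd_pow 3 (by omega)
      norm_num at h9
    have hZQ : Subgroup.center G ≤ Q :=
      le_inf (Subgroup.center_le_centralizer _) hZP
    have hcard : Nat.card Q ≤ 3 := by
      rw [hn]
      calc 3 ^ n ≤ 3 ^ 1 := Nat.pow_le_pow_right (by norm_num) hn1
        _ = 3 := by norm_num
    have heq : Subgroup.center G = Q :=
      Subgroup.eq_of_le_of_card_ge hZQ (by rw [hZ]; exact hcard)
    have hgQ : g ∈ Q :=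
      Subgroup.mem_inf.mpr ⟨Subgroup.mem_centralizer_iff.mpr (by simp), hg⟩
    exact hgZ (by rw [heq]; exact hgQ)
  have hPeq : (P : Subgroup G) = Subgroup.center G := le_antisymm hPZ hZP
  have h9 : ¬ (9:ℕ) ∣ Nat.card G := by
    have hmult := P.card_eq_multiplicity
    rw [hPeq, hZ] at hmult
    have hf : (Nat.card G).factorization 3 = 1 := by
      have h31 : (3:ℕ) ^ 1 = 3 ^ (Nat.card G).factorization 3 := by simpa using hmult
      exact (Nat.pow_right_injective (by norm_num) h31).symm
    intro hdvd
    have h92 : (3:ℕ) ^ 2 ∣ Nat.card G := by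
      have : (9:ℕ) = 3 ^ 2 := by norm_num
      rwa [this] at hdvd
    have := (Nat.Prime.pow_dvd_iff_le_factorization (by norm_num)
      (Nat.card_pos (α := G)).ne').mp h92
    omega
  -- class equation
  have hcls := Group.nat_card_center_add_sum_card_noncenter_eq_card G
  have h6 : (6:ℕ) ∣ Nat.card G := hC a ha ▸ Subgroup.card_subgroup_dvd_card _
  obtain ⟨m, hm⟩ := h6
  have hm0 : 0 < m := by
    have := Nat.card_pos (α := G)
    omega
  have hfin : (ConjClasses.noncenter G).Finite := Set.toFinite _
  have hval : ∀ x ∈ hfin.toFinset, Nat.card (ConjClasses.carrier x) = m := by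
    intro x hx
    rw [Set.Finite.mem_toFinset, ConjClasses.mem_noncenter] at hx
    obtain ⟨g, rfl⟩ := ConjClasses.mk_surjective x
    have hg : g ∉ Subgroup.center G := by
      intro hgZ
      refine hx.not_subsingleton ?_
      intro h1 h1m h2 h2m
      have e1 : ∀ h ∈ (ConjClasses.mk g).carrier, h = g := by
        intro h hm'
        have hconj : IsConj g h :=
          (ConjClasses.mk_eq_mk_iff_isConj.mp (ConjClasses.mem_carrier_iff_mk_eq.mp hm')).symm
        obtain ⟨c, hc⟩ := isConj_iff.mp hconj
        rw [← hc, Subgroup.mem_center_iff.mp hgZ c, mul_inv_cancel_right]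
      rw [e1 h1 h1m, e1 h2 h2m]
    have hmc := card_carrier_mul_card_centralizer g
    rw [hC g hg, hm] at hmc
    omega
  set k := hfin.toFinset.card with hk
  have hsum : ∑ᶠ x ∈ ConjClasses.noncenter G, Nat.card (ConjClasses.carrier x) = k * m := by
    rw [finsum_mem_eq_finite_toFinset_sum _ hfin, Finset.sum_congr rfl hval,
      Finset.sum_const, smul_eq_mul]
  rw [hZ, hsum, hm] at hcls
  -- hcls : 3 + k * m = 6 * m
  have hdvd3 : m ∣ 3 := by
    have hsub : 6 * m - k * m = 3 := by
      obtain ⟨c, hc⟩ : ∃ c, c = k * m := ⟨_, rfl⟩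
      rw [← hc] at hcls ⊢
      omega
    exact hsub ▸ Nat.dvd_sub ⟨6, mul_comm 6 m⟩ ⟨k, mul_comm k m⟩
  rcases (Nat.dvd_prime Nat.prime_three).mp hdvd3 with h1 | h3
  · -- |G| = 6
    subst h1
    have htop : Subgroup.centralizer ({a} : Set G) = ⊤ :=
      Subgroup.eq_top_of_card_eq (H := Subgroup.centralizer ({a} : Set G))
        (by rw [hC a ha, hm])
    refine ha (Subgroup.mem_center_iff.mpr fun g => ?_)
    have hg : g ∈ Subgroup.centralizer ({a} : Set G) := by rw [htop]; trivial
    exact (Subgroup.mem_centralizer_iff.mp hg a rfl).symm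
  · subst h3
    exact h9 (by rw [hm]; norm_num)

/-- There is no finite non-abelian group `G` with `|Z(G)| = 3` in which every
noncentral element has centralizer of order `6`.  In particular, no finite non-abelian
group with center of order `3` is strong claw-free. -/
theorem no_group_center_three_claw_free :
    (∀ (G : Type) [Group G] [Fintype G], (¬ ∀ a b : G, a * b = b * a) →
      Nat.card (Subgroup.center G) = 3 →
      ¬ (∀ x : G, x ∉ Subgroup.center G →
        Nat.card (Subgroup.centralizer ({x} : Set G)) = 6)) ∧
    (∀ (G : Type) [Group G] [Fintype G], (¬ ∀ a b : G, a * b = b * a) →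
      Nat.card (Subgroup.center G) = 3 →
      ¬ (∀ x : G, x ∉ Subgroup.center G →
        Nat.card (Subgroup.centralizer ({x} : Set G)) <
          4 + Nat.card (Subgroup.center G))) := by
  constructor
  · intro G _ _ hna hZ hC
    exact key_lemma G hna hZ hC
  · intro G _ _ hna hZ hlt
    refine key_lemma G hna hZ (fun x hx => ?_)
    have h7 := hlt x hx
    rw [hZ] at h7
    have h3 : (3:ℕ) ∣ Nat.card (Subgroup.centralizer ({x} : Set G)) :=
      hZ ▸ Subgroup.card_dvd_of_le (Subgroup.center_le_centralizer _)
    have hpos : 0 < Nat.card (Subgroup.centralizer ({x} : Set G)) := Nat.card_pos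
    have hne3 : Nat.card (Subgroup.centralizer ({x} : Set G)) ≠ 3 := by
      intro h3'
      have heq : Subgroup.center G = Subgroup.centralizer ({x} : Set G) :=
        Subgroup.eq_of_le_of_card_ge (Subgroup.center_le_centralizer _)
          (by rw [hZ, h3'])
      refine hx ?_
      rw [heq]
      exact Subgroup.mem_centralizer_iff.mpr (by simp)
    omega
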